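/- arXiv:1907.13023 — 2 statements merged into one kernel-verified Lean document; each statement's English description precedes it below -/
import Mathlib

section
/- Suppose (H1)–(H3) hold, (H4) holds with μ > 0 and μ < M := max{2L₀, 4L}, and g has a global minimizer y*. Let {y_k} be generated by Algorithm A. Then for every integer T with T ≥ [log₂(1 + μ/(M − μ))]^{-1}, ‖∇g(y_T)‖ ≤ [2q·M^{q−1}·N^q·μ·β_d(y₀, y*)/σ_q]^{1/q}·(1 + μ/(M − μ))^{−T/q}. -/
open scoped InnerProductSpace

/-- The Bregman distance `β_d(u, v) = d(v) − d(u) − ⟨∇d(u), v − u⟩`. -/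
noncomputable def breg {E : Type*} [NormedAddCommGroup E] [InnerProductSpace ℝ E]
    [CompleteSpace E] (d : E → ℝ) (u v : E) : ℝ :=
  d v - d u - ⟪gradient d u, v - u⟫_ℝ

section AuxiliaryLemmas

variable {E : Type*} [NormedAddCommGroup E] [InnerProductSpace ℝ E] [CompleteSpace E]

lemma breg_self (d : E → ℝ) (u : E) : breg d u u = 0 := by simp [breg]

lemma breg_three_point (d : E → ℝ) (u w x : E) :
    breg d u x - breg d u w - breg d w x
      = ⟪gradient d w - gradient d u, x - w⟫_ℝ := by
  simp only [breg, inner_sub_left, inner_sub_right]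
  ring

lemma hasGradientAt_phi (d : E → ℝ) (hd : Differentiable ℝ d) (a yk : E) (c : ℝ) (w : E) :
    HasGradientAt (fun z => ⟪a, z - yk⟫_ℝ + c * breg d yk z)
      (a + c • (gradient d w - gradient d yk)) w := by
  have hb : HasGradientAt d (gradient d w) w := (hd w).hasGradientAt
  have hfd : HasFDerivAt d (InnerProductSpace.toDual ℝ E (gradient d w)) w :=
    hb.hasFDerivAt
  have h1 : HasFDerivAt (fun z : E => ⟪a, z - yk⟫_ℝ) (innerSL ℝ a) w := by
    have := ((innerSL ℝ a).hasFDerivAt (x := w)).sub_const ⟪a, yk⟫_ℝ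
    simpa [inner_sub_right] using this
  have h3 : HasFDerivAt (fun z : E => ⟪gradient d yk, z - yk⟫_ℝ)
      (innerSL ℝ (gradient d yk)) w := by
    have := ((innerSL ℝ (gradient d yk)).hasFDerivAt (x := w)).sub_const
      ⟪gradient d yk, yk⟫_ℝ
    simpa [inner_sub_right] using this
  have h2 : HasFDerivAt (fun z : E => breg d yk z)
      (InnerProductSpace.toDual ℝ E (gradient d w) - innerSL ℝ (gradient d yk)) w := by
    have := (hfd.sub_const (d yk)).sub h3
    exact this
  have htot : HasFDerivAt (fun z => ⟪a, z - yk⟫_ℝ + c * breg d yk z)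
      (innerSL ℝ a + c • (InnerProductSpace.toDual ℝ E (gradient d w) - innerSL ℝ (gradient d yk))) w :=
    h1.add (h2.const_mul c)
  rw [hasGradientAt_iff_hasFDerivAt]
  refine htot.congr_fderiv ?_
  ext z
  simp [inner_add_left, inner_smul_left, inner_sub_left, InnerProductSpace.toDual_apply_apply,
    real_inner_smul_left]

lemma prox_grad_eq (d : E → ℝ) (hd : Differentiable ℝ d) (a yk w : E) (c : ℝ)
    (hmin : ∀ z, ⟪a, w - yk⟫_ℝ + c * breg d yk w ≤ ⟪a, z - yk⟫_ℝ + c * breg d yk z) :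
    a = c • (gradient d yk - gradient d w) := by
  have h := hasGradientAt_phi d hd a yk c w
  have hlm : IsLocalMin (fun z => ⟪a, z - yk⟫_ℝ + c * breg d yk z) w :=
    Filter.Eventually.of_forall hmin
  have h0 := hlm.hasFDerivAt_eq_zero h.hasFDerivAt
  have h0' : a + c • (gradient d w - gradient d yk) = 0 := by
    have := (InnerProductSpace.toDual ℝ E).map_eq_zero_iff.mp (by exact_mod_cast h0)
    exact this
  have : a = -(c • (gradient d w - gradient d yk)) := by
    linear_combination (norm := module) h0'
  rw [this]; rw [smul_sub, smul_sub]; abel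

lemma breg_nonneg {d : E → ℝ} {q σq : ℝ} (hq : 2 ≤ q) (hσq : 0 < σq)
    (hH2 : ∀ x y : E, σq / q * ‖x - y‖ ^ q ≤ breg d y x) (u v : E) :
    0 ≤ breg d u v := by
  refine le_trans ?_ (hH2 v u)
  have hq0 : 0 < q := by linarith
  positivity

lemma exists_prox [FiniteDimensional ℝ E] {d : E → ℝ} (hdc : Continuous d)
    {q σq : ℝ} (hq : 2 ≤ q) (hσq : 0 < σq)
    (hH2 : ∀ x y : E, σq / q * ‖x - y‖ ^ q ≤ breg d y x)
    (a yk : E) (c : ℝ) (hc : 0 < c) :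
    ∃ w : E, ∀ z : E, ⟪a, w - yk⟫_ℝ + c * breg d yk w ≤ ⟪a, z - yk⟫_ℝ + c * breg d yk z := by
  have hq0 : 0 < q := by linarith
  set A : ℝ := c * (σq / q) with hA
  have hApos : 0 < A := by positivity
  -- lower bound for φ
  have key : ∀ z : E, A * ‖z - yk‖ ^ q - ‖a‖ * ‖z - yk‖ ≤
      ⟪a, z - yk⟫_ℝ + c * breg d yk z := by
    intro z
    have h1 : -(‖a‖ * ‖z - yk‖) ≤ ⟪a, z - yk⟫_ℝ :=
      neg_le_of_abs_le (abs_real_inner_le_norm a (z - yk))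
    have h2 : A * ‖z - yk‖ ^ q ≤ c * breg d yk z := by
      rw [hA, mul_assoc]
      exact mul_le_mul_of_nonneg_left (hH2 z yk) hc.le
    linarith
  -- coercivity of the minorant
  have hmono : Filter.Tendsto (fun r : ℝ => A * r ^ q - ‖a‖ * r) Filter.atTop Filter.atTop := by
    have hprod : Filter.Tendsto (fun r : ℝ => (A * r - ‖a‖) * r) Filter.atTop Filter.atTop := by
      apply Filter.Tendsto.atTop_mul_atTop₀ _ Filter.tendsto_id
      apply Filter.tendsto_atTop_add_const_right
      exact Filter.Tendsto.const_mul_atTop hApos Filter.tendsto_id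
    apply Filter.tendsto_atTop_mono' _ _ hprod
    filter_upwards [Filter.eventually_ge_atTop (1 : ℝ)] with r hr
    have h2q : r ^ (2:ℝ) ≤ r ^ q := Real.rpow_le_rpow_of_exponent_le hr hq
    have hr2 : r * r ≤ r ^ q := by
      calc r * r = r ^ (2:ℝ) := by
            rw [show (2:ℝ) = ((2:ℕ):ℝ) by norm_num, Real.rpow_natCast]; ring
        _ ≤ r ^ q := h2q
    nlinarith [mul_le_mul_of_nonneg_left hr2 hApos.le]
  have hnorm : Filter.Tendsto (fun z : E => ‖z - yk‖) (Filter.cocompact E) Filter.atTop := by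
    have h1 : Filter.Tendsto (fun z : E => z - yk) (Filter.cocompact E) (Filter.cocompact E) := by
      have heq : (fun z : E => z - yk) = ⇑(Homeomorph.subRight yk) := rfl
      rw [heq]
      exact ((Homeomorph.subRight yk).map_cocompact).le
    exact tendsto_norm_cocompact_atTop.comp h1
  have hcoer : Filter.Tendsto (fun z : E => ⟪a, z - yk⟫_ℝ + c * breg d yk z)
      (Filter.cocompact E) Filter.atTop := by
    apply Filter.tendsto_atTop_mono' _ _ (hmono.comp hnorm)
    exact Filter.Eventually.of_forall key
  have hcont : Continuous (fun z : E => ⟪a, z - yk⟫_ℝ + c * breg d yk z) := by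
    apply Continuous.add
    · exact (continuous_const.inner (continuous_id.sub continuous_const))
    · exact continuous_const.mul ((hdc.sub continuous_const).sub
        (continuous_const.inner (continuous_id.sub continuous_const)))
  exact hcont.exists_forall_le hcoer

lemma grad_lipschitz {d : E → ℝ} (hd2 : ContDiff ℝ 2 d) {s : Set E} (hs : Convex ℝ s)
    {N : ℝ} (hN : ∀ z ∈ s, ‖iteratedFDeriv ℝ 2 d z‖ ≤ N)
    {x z : E} (hx : x ∈ s) (hz : z ∈ s) :
    ‖gradient d x - gradient d z‖ ≤ N * ‖x - z‖ := by
  have hfd : Differentiable ℝ (fderiv ℝ d) := by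
    have h := (hd2.fderiv_right (m := 1) (by norm_num))
    exact h.differentiable (by norm_num)
  set J : (E →L[ℝ] ℝ) →L[ℝ] E :=
    (InnerProductSpace.toDual ℝ E).symm.toContinuousLinearEquiv.toContinuousLinearMap with hJ
  have hgrad : ∀ u : E, HasFDerivAt (gradient d)
      (J.comp (fderiv ℝ (fderiv ℝ d) u)) u := by
    intro u
    have h1 : HasFDerivAt (fderiv ℝ d) (fderiv ℝ (fderiv ℝ d) u) u :=
      (hfd u).hasFDerivAt
    have h2 := J.hasFDerivAt.comp u h1
    exact h2
  have hbound : ∀ u ∈ s, ‖J.comp (fderiv ℝ (fderiv ℝ d) u)‖ ≤ N := by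
    intro u hu
    have hNnn : 0 ≤ N := le_trans (norm_nonneg _) (hN u hu)
    apply ContinuousLinearMap.opNorm_le_bound _ hNnn
    intro v
    have hJv : ∀ T : E →L[ℝ] ℝ, ‖J T‖ = ‖T‖ := fun T =>
      (InnerProductSpace.toDual ℝ E).symm.norm_map T
    rw [ContinuousLinearMap.comp_apply, hJv]
    apply ContinuousLinearMap.opNorm_le_bound _ (by positivity)
    intro w
    have := iteratedFDeriv_two_apply (𝕜 := ℝ) d u ![v, w]
    simp only [Matrix.cons_val_zero, Matrix.cons_val_one, Matrix.head_cons] at this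
    rw [← this]
    calc ‖iteratedFDeriv ℝ 2 d u ![v, w]‖
        ≤ ‖iteratedFDeriv ℝ 2 d u‖ * ∏ i, ‖(![v, w]) i‖ :=
          (iteratedFDeriv ℝ 2 d u).le_opNorm _
      _ ≤ N * (‖v‖ * ‖w‖) := by
          rw [Fin.prod_univ_two]
          simp only [Matrix.cons_val_zero, Matrix.cons_val_one, Matrix.head_cons]
          exact mul_le_mul_of_nonneg_right (hN u hu) (by positivity)
      _ = N * ‖v‖ * ‖w‖ := by ring
  have := Convex.norm_image_sub_le_of_norm_hasFDerivWithin_le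
    (f := gradient d) (f' := fun u => J.comp (fderiv ℝ (fderiv ℝ d) u))
    (fun u hu => (hgrad u).hasFDerivWithinAt) hbound hs hz hx
  simpa [norm_sub_rev] using this

end AuxiliaryLemmas

/-- One successful step of the adaptive Bregman proximal gradient method with coefficient `M`:
`w` is a global minimizer of `z ↦ ⟨∇g(yk), z − yk⟩ + M·β_d(yk, z)` and satisfies the
sufficient-decrease acceptance test. -/
noncomputable def stepOK {E : Type*} [NormedAddCommGroup E] [InnerProductSpace ℝ E]
    [CompleteSpace E] (g d : E → ℝ) (M : ℝ) (yk w : E) : Prop :=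
  (∀ z : E, ⟪gradient g yk, w - yk⟫_ℝ + M * breg d yk w
      ≤ ⟪gradient g yk, z - yk⟫_ℝ + M * breg d yk z) ∧
  g w ≤ g yk + ⟪gradient g yk, w - yk⟫_ℝ + M * breg d yk w

/-- Algorithm A (adaptive Bregman proximal gradient method): `L 0 = L₀` and, for each `k`,
`i k` is the smallest integer `≥ 0` such that the regularized step with coefficient
`2^{i k}·L k` exists and is accepted, `y (k+1)` is that step, and `L (k+1) = 2^{i k − 1}·L k`. -/
noncomputable def algA {E : Type*} [NormedAddCommGroup E] [InnerProductSpace ℝ E]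
    [CompleteSpace E] (g d : E → ℝ) (L0 : ℝ) (y : ℕ → E) (L : ℕ → ℝ) (i : ℕ → ℕ) : Prop :=
  L 0 = L0 ∧ ∀ k : ℕ,
    stepOK g d ((2 : ℝ) ^ i k * L k) (y k) (y (k + 1)) ∧
    (∀ j : ℕ, j < i k → ¬ ∃ w : E, stepOK g d ((2 : ℝ) ^ j * L k) (y k) w) ∧
    L (k + 1) = (2 : ℝ) ^ i k * L k / 2

set_option maxHeartbeats 2000000 in
/-- Corollary A.6. Under (H1)–(H3) and (H4) with `0 < μ < M := max{2L₀, 4L}`,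
for every `T ≥ [log₂(1 + μ/(M − μ))]⁻¹`, Algorithm A satisfies
`‖∇g(y_T)‖ ≤ [2q·M^{q−1}·N^q·μ·β_d(y₀, y*)/σ_q]^{1/q}·(1 + μ/(M − μ))^{−T/q}`. -/
theorem statement_16
    {E : Type*} [NormedAddCommGroup E] [InnerProductSpace ℝ E] [FiniteDimensional ℝ E]
    (d : E → ℝ) (hd : ConvexOn ℝ Set.univ d)
    (g : E → ℝ) (hg : Differentiable ℝ g)
    (L : ℝ) (hL : 0 < L)
    (hH1 : ∀ x y : E, g x ≤ g y + ⟪gradient g y, x - y⟫_ℝ + L * breg d y x)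
    (q σq : ℝ) (hq : 2 ≤ q) (hσq : 0 < σq)
    (hd2 : ContDiff ℝ 2 d)
    (hH2 : ∀ x y : E, σq / q * ‖x - y‖ ^ q ≤ breg d y x)
    (μ : ℝ) (hμ : 0 < μ)
    (hH4 : ∀ x y : E, g y + ⟪gradient g y, x - y⟫_ℝ + μ * breg d y x ≤ g x)
    (L0 : ℝ) (hL0 : 0 < L0)
    (hμM : μ < max (2 * L0) (4 * L))
    (y : ℕ → E) (Lk : ℕ → ℝ) (ik : ℕ → ℕ)
    (halg : algA g d L0 y Lk ik)
    (N : ℝ)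
    (hH3 : ∀ z ∈ convexHull ℝ {w : E | g w ≤ g (y 0)}, ‖iteratedFDeriv ℝ 2 d z‖ ≤ N)
    (ystar : E) (hmin : ∀ z : E, g ystar ≤ g z)
    (T : ℕ)
    (hT : (Real.logb 2 (1 + μ / (max (2 * L0) (4 * L) - μ)))⁻¹ ≤ (T : ℝ)) :
    ‖gradient g (y T)‖ ≤
      (2 * q * max (2 * L0) (4 * L) ^ (q - 1) * N ^ q * μ * breg d (y 0) ystar / σq) ^ (1 / q)
        * (1 + μ / (max (2 * L0) (4 * L) - μ)) ^ (-(T : ℝ) / q) := by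
  obtain ⟨hL00, hstep⟩ := halg
  set M : ℝ := max (2 * L0) (4 * L) with hMdef
  have hq0 : (0:ℝ) < q := by linarith
  have hdd : Differentiable ℝ d := hd2.differentiable (by norm_num)
  have hdc : Continuous d := hdd.continuous
  have hbreg0 : ∀ u v : E, 0 ≤ breg d u v := fun u v => breg_nonneg hq hσq hH2 u v
  have hMμ : μ < M := hμM
  have hMpos : 0 < M := lt_trans hμ hMμ
  have hL0M : 2 * L0 ≤ M := le_max_left _ _
  have hLM : 4 * L ≤ M := le_max_right _ _
  -- positivity of the backtracking constants
  have hLkpos : ∀ k, 0 < Lk k := by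
    intro k; induction k with
    | zero => rw [hL00]; exact hL0
    | succ n ih => rw [(hstep n).2.2]; positivity
  -- a rejected coefficient must be below L
  have hrej : ∀ k j : ℕ, (¬ ∃ w : E, stepOK g d ((2:ℝ) ^ j * Lk k) (y k) w) →
      (2:ℝ) ^ j * Lk k < L := by
    intro k j hne
    by_contra hge
    push_neg at hge
    apply hne
    obtain ⟨w, hw⟩ := exists_prox hdc hq hσq hH2 (gradient g (y k)) (y k)
      ((2:ℝ) ^ j * Lk k) (by have := hLkpos k; positivity)
    refine ⟨w, hw, ?_⟩
    have h1 := hH1 w (y k)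
    have h2 := hbreg0 (y k) w
    nlinarith
  -- the accepted coefficients are bounded by M
  have hMk_le : ∀ k, (2:ℝ) ^ ik k * Lk k ≤ max (Lk k) (2 * L) := by
    intro k
    rcases Nat.eq_zero_or_pos (ik k) with h0 | hpos
    · rw [h0]; simp only [pow_zero, one_mul]; exact le_max_left (Lk k) (2*L)
    · obtain ⟨j, hj⟩ := Nat.exists_eq_succ_of_ne_zero (Nat.pos_iff_ne_zero.mp hpos)
      have hr := hrej k j ((hstep k).2.1 j (by omega))
      have heq : (2:ℝ) ^ ik k * Lk k = 2 * ((2:ℝ) ^ j * Lk k) := by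
        rw [hj, pow_succ]; ring
      rw [heq]
      have : 2 * ((2:ℝ) ^ j * Lk k) ≤ 2 * L := by linarith
      exact le_trans this (le_max_right _ _)
  have hLk_le : ∀ k, Lk k ≤ max L0 (2 * L) := by
    intro k; induction k with
    | zero => rw [hL00]; exact le_max_left _ _
    | succ n ih =>
      rw [(hstep n).2.2]
      have h1 := hMk_le n
      have h2 : max (Lk n) (2 * L) ≤ max L0 (2 * L) :=
        max_le (le_trans ih le_rfl) (le_max_right _ _)
      have h3 : 0 < (2:ℝ) ^ ik n * Lk n := by have := hLkpos n; positivity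
      have h4 : (0:ℝ) ≤ max L0 (2*L) := le_trans (by linarith : (0:ℝ) ≤ 2*L) (le_max_right _ _)
      linarith
  have hMkM : ∀ k, (2:ℝ) ^ ik k * Lk k ≤ M := by
    intro k
    refine le_trans (hMk_le k) (max_le ?_ ?_)
    · exact le_trans (hLk_le k) (max_le (by linarith) (by linarith))
    · linarith
  have hMkpos : ∀ k, 0 < (2:ℝ) ^ ik k * Lk k := by
    intro k; have := hLkpos k; positivity
  -- monotone decrease of g along the iterates
  have hdec : ∀ k, g (y (k + 1)) ≤ g (y k) := by
    intro k
    obtain ⟨hmin', hacc⟩ := (hstep k).1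
    have h0 := hmin' (y k)
    rw [breg_self, sub_self, inner_zero_right] at h0
    have hb := hbreg0 (y k) (y (k+1))
    nlinarith
  have hanti : ∀ i j : ℕ, i ≤ j → g (y j) ≤ g (y i) := by
    intro i j hij
    induction j with
    | zero => cases Nat.le_zero.mp hij; exact le_rfl
    | succ n ih =>
      rcases Nat.lt_or_ge i (n+1) with h | h
      · exact le_trans (hdec n) (ih (Nat.lt_succ_iff.mp h))
      · have : i = n + 1 := le_antisymm hij h
        rw [this]
  -- iterates live in the sublevel set
  have hyhull : ∀ k, y k ∈ convexHull ℝ {w : E | g w ≤ g (y 0)} := by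
    intro k
    exact subset_convexHull ℝ _ (by exact hanti 0 k (Nat.zero_le _))
  have hN0 : 0 ≤ N := le_trans (norm_nonneg _) (hH3 (y 0) (hyhull 0))
  -- gradient identity from prox optimality
  have hgid : ∀ k, gradient g (y k)
      = ((2:ℝ) ^ ik k * Lk k) • (gradient d (y k) - gradient d (y (k + 1))) :=
    fun k => prox_grad_eq d hdd _ _ _ _ (hstep k).1.1
  -- Claim B
  have hB : ∀ (k : ℕ) (x : E), g (y (k + 1)) ≤ g x
      + ((2:ℝ) ^ ik k * Lk k - μ) * breg d (y k) x
      - ((2:ℝ) ^ ik k * Lk k) * breg d (y (k + 1)) x := by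
    intro k x
    obtain ⟨hmin', hacc⟩ := (hstep k).1
    have h4 := hH4 x (y k)
    have h3 := breg_three_point d (y k) (y (k + 1)) x
    have hsplit : ⟪gradient g (y k), y (k+1) - y k⟫_ℝ
        = ⟪gradient g (y k), y (k+1) - x⟫_ℝ + ⟪gradient g (y k), x - y k⟫_ℝ := by
      rw [← inner_add_right]
      congr 1
      abel
    have hinner : ⟪gradient g (y k), y (k+1) - x⟫_ℝ
        = ((2:ℝ) ^ ik k * Lk k) * (breg d (y k) x - breg d (y k) (y (k+1))
            - breg d (y (k+1)) x) := by
      rw [hgid k, real_inner_smul_left, h3]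
      congr 1
      rw [← inner_neg_neg]
      congr 1 <;> abel
    nlinarith [hacc, h4, hinner, hsplit]
  -- the contraction factor
  have hrec : ∀ k, M * breg d (y (k+1)) ystar + (g (y (k+1)) - g ystar)
      ≤ (M - μ) * breg d (y k) ystar := by
    intro k
    set c := (2:ℝ) ^ ik k * Lk k with hcdef
    have hc0 : 0 < c := hMkpos k
    have hcM : c ≤ M := hMkM k
    have hBk := hB k ystar
    have hβ0 : 0 ≤ breg d (y k) ystar := hbreg0 _ _
    have hβ1 : 0 ≤ breg d (y (k+1)) ystar := hbreg0 _ _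
    have hΔ1 : 0 ≤ g (y (k+1)) - g ystar := sub_nonneg.mpr (hmin _)
    have h1 : c * breg d (y (k+1)) ystar + (g (y (k+1)) - g ystar)
        ≤ (c - μ) * breg d (y k) ystar := by nlinarith
    have hble : breg d (y (k+1)) ystar ≤ breg d (y k) ystar := by nlinarith
    nlinarith [mul_le_mul_of_nonneg_left hble (sub_nonneg.mpr hcM)]
  -- contraction ratio
  set ρ : ℝ := (M - μ) / M with hρdef
  have hρpos : 0 < ρ := div_pos (by linarith) hMpos
  have hρlt : ρ < 1 := by rw [hρdef, div_lt_one hMpos]; linarith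
  have hρM : (M - μ) = ρ * M := by rw [hρdef]; field_simp
  clear_value ρ
  -- telescoped chain
  have hchain : ∀ n, n ≤ T → M * breg d (y n) ystar
      + (g (y T) - g ystar) * (∑ j ∈ Finset.range n, ρ ^ j)
      ≤ M * ρ ^ n * breg d (y 0) ystar := by
    intro n hn
    induction n with
    | zero => simp
    | succ m ih =>
      have ihm := ih (Nat.le_of_succ_le hn)
      have hrm := hrec m
      have hΔTm : g (y T) - g ystar ≤ g (y (m+1)) - g ystar :=
        sub_le_sub_right (hanti (m+1) T hn) _
      have hΔT0 : 0 ≤ g (y T) - g ystar := sub_nonneg.mpr (hmin _)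
      rw [geom_sum_succ']
      rw [pow_succ]
      have hgs : (∑ j ∈ Finset.range m, ρ ^ j) * (ρ - 1) = ρ ^ m - 1 := geom_sum_mul ρ m
      have hgs' : (g (y T) - g ystar) * ((∑ j ∈ Finset.range m, ρ ^ j) * (ρ - 1))
          = (g (y T) - g ystar) * (ρ ^ m - 1) := by rw [hgs]
      have hρMβ : (M - μ) * breg d (y m) ystar = ρ * (M * breg d (y m) ystar) := by
        rw [hρM]; ring
      nlinarith [mul_le_mul_of_nonneg_left ihm hρpos.le]
  -- the ratio bound from the time condition
  set ρ' : ℝ := 1 + μ / (M - μ) with hρ'def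
  have hMμ0 : M - μ ≠ 0 := ne_of_gt (by linarith)
  have hρ'mul : ρ' * ρ = 1 := by
    rw [hρ'def, hρdef]
    field_simp
    ring
  have hρ'gt1 : 1 < ρ' := by
    rw [hρ'def]
    have : 0 < μ / (M - μ) := div_pos hμ (by linarith)
    linarith
  clear_value ρ'
  have hρ'pos : 0 < ρ' := lt_trans one_pos hρ'gt1
  have hρ'inv : ρ' = ρ⁻¹ := eq_inv_of_mul_eq_one_left (by rw [mul_comm] at hρ'mul ⊢; exact hρ'mul)
  have hlogpos : 0 < Real.logb 2 ρ' := Real.logb_pos (by norm_num) hρ'gt1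
  have hT1 : 1 ≤ (T:ℝ) * Real.logb 2 ρ' := by
    have h := mul_le_mul_of_nonneg_left hT hlogpos.le
    rw [mul_inv_cancel₀ (ne_of_gt hlogpos)] at h
    linarith [h, mul_comm (Real.logb 2 ρ') (T:ℝ)]
  have hρ'T : 2 ≤ ρ' ^ T := by
    have hbase : ρ' = (2:ℝ) ^ Real.logb 2 ρ' :=
      (Real.rpow_logb (by norm_num) (by norm_num) hρ'pos).symm
    calc (2:ℝ) = (2:ℝ) ^ (1:ℝ) := (Real.rpow_one 2).symm
      _ ≤ (2:ℝ) ^ ((Real.logb 2 ρ') * (T:ℝ)) := by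
          apply Real.rpow_le_rpow_of_exponent_le (by norm_num)
          rw [mul_comm]; exact hT1
      _ = ((2:ℝ) ^ Real.logb 2 ρ') ^ (T:ℝ) := by
          rw [← Real.rpow_mul (by norm_num)]
      _ = ρ' ^ (T:ℝ) := by rw [← hbase]
      _ = ρ' ^ T := by rw [Real.rpow_natCast]
  have hhalf : ρ ^ T ≤ 1 / 2 := by
    have hmulT : ρ' ^ T * ρ ^ T = 1 := by rw [← mul_pow, hρ'mul, one_pow]
    have hρT0 : 0 < ρ ^ T := pow_pos hρpos T
    nlinarith
  -- the function-value rate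
  have hΔT0 : 0 ≤ g (y T) - g ystar := sub_nonneg.mpr (hmin _)
  have hβ00 : 0 ≤ breg d (y 0) ystar := hbreg0 _ _
  have hrate : g (y T) - g ystar ≤ 2 * μ * ρ ^ T * breg d (y 0) ystar := by
    have hcT := hchain T le_rfl
    have hβT0 : 0 ≤ breg d (y T) ystar := hbreg0 _ _
    have hS : (∑ j ∈ Finset.range T, ρ ^ j) * (ρ - 1) = ρ ^ T - 1 := geom_sum_mul ρ T
    have h1ρS : (1 - ρ) * (∑ j ∈ Finset.range T, ρ ^ j) = 1 - ρ ^ T := by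
      linear_combination -hS
    have hMρ : M * (1 - ρ) = μ := by rw [hρdef]; field_simp; ring
    have hμS : μ * (∑ j ∈ Finset.range T, ρ ^ j) = M * (1 - ρ ^ T) := by
      linear_combination M * h1ρS - (∑ j ∈ Finset.range T, ρ ^ j) * hMρ
    have hμSge : M / 2 ≤ μ * (∑ j ∈ Finset.range T, ρ ^ j) := by
      rw [hμS]; nlinarith
    have hA : (g (y T) - g ystar) * (∑ j ∈ Finset.range T, ρ ^ j)
        ≤ M * ρ ^ T * breg d (y 0) ystar := by nlinarith
    nlinarith [mul_le_mul_of_nonneg_left hA hμ.le,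
      mul_le_mul_of_nonneg_left hμSge hΔT0, hMpos]
  -- final step estimates at time T
  set c : ℝ := (2:ℝ) ^ ik T * Lk T with hcdef
  have hc0 : 0 < c := hMkpos T
  have hcM : c ≤ M := hMkM T
  have hbT : c * breg d (y (T+1)) (y T) ≤ g (y T) - g ystar := by
    have hBT := hB T (y T)
    rw [breg_self] at hBT
    have h2 := hmin (y (T+1))
    nlinarith
  have hrq : σq / q * ‖y T - y (T+1)‖ ^ q ≤ (g (y T) - g ystar) / c := by
    refine le_trans (hH2 (y T) (y (T+1))) ?_
    rw [le_div_iff₀ hc0]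
    calc breg d (y (T+1)) (y T) * c = c * breg d (y (T+1)) (y T) := by ring
      _ ≤ g (y T) - g ystar := hbT
  have hgnorm : ‖gradient g (y T)‖ ≤ c * (N * ‖y T - y (T+1)‖) := by
    rw [hgid T, norm_smul, Real.norm_eq_abs, abs_of_pos hc0]
    exact mul_le_mul_of_nonneg_left
      (grad_lipschitz hd2 (convex_convexHull ℝ _) hH3 (hyhull T) (hyhull (T+1))) hc0.le
  have hr0 : (0:ℝ) ≤ ‖y T - y (T+1)‖ := norm_nonneg _
  have hA0 : (0:ℝ) ≤ ‖gradient g (y T)‖ := norm_nonneg _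
  have hrq' : ‖y T - y (T+1)‖ ^ q ≤ q / σq * ((g (y T) - g ystar) / c) := by
    have h := mul_le_mul_of_nonneg_left hrq (le_of_lt (div_pos hq0 hσq))
    calc ‖y T - y (T+1)‖ ^ q = q / σq * (σq / q * ‖y T - y (T+1)‖ ^ q) := by
          rw [← mul_assoc]
          rw [div_mul_div_comm, mul_comm q σq, div_self (by positivity : σq * q ≠ 0), one_mul]
      _ ≤ q / σq * ((g (y T) - g ystar) / c) := h
  have hAq : ‖gradient g (y T)‖ ^ q
      ≤ (2 * q * M ^ (q - 1) * N ^ q * μ * breg d (y 0) ystar / σq) * ρ ^ T := by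
    have h1 : ‖gradient g (y T)‖ ^ q ≤ (c * (N * ‖y T - y (T+1)‖)) ^ q :=
      Real.rpow_le_rpow hA0 hgnorm hq0.le
    have h2 : (c * (N * ‖y T - y (T+1)‖)) ^ q = c ^ q * (N ^ q * ‖y T - y (T+1)‖ ^ q) := by
      rw [Real.mul_rpow hc0.le (by positivity), Real.mul_rpow hN0 hr0]
    have h3 : c ^ q * (N ^ q * ‖y T - y (T+1)‖ ^ q)
        ≤ c ^ q * (N ^ q * (q / σq * ((g (y T) - g ystar) / c))) := by
      have hNq : (0:ℝ) ≤ N ^ q := Real.rpow_nonneg hN0 q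
      have hcq : (0:ℝ) ≤ c ^ q := Real.rpow_nonneg hc0.le q
      exact mul_le_mul_of_nonneg_left
        (mul_le_mul_of_nonneg_left hrq' hNq) hcq
    have hcq1 : c ^ q = c ^ (q - 1) * c := by
      have h := Real.rpow_add hc0 (q - 1) 1
      rw [sub_add_cancel, Real.rpow_one] at h
      exact h
    have h4 : c ^ q * (N ^ q * (q / σq * ((g (y T) - g ystar) / c)))
        = c ^ (q - 1) * N ^ q * q * (g (y T) - g ystar) / σq := by
      rw [hcq1]
      field_simp
    have h5 : c ^ (q - 1) ≤ M ^ (q - 1) := Real.rpow_le_rpow hc0.le hcM (by linarith)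
    have hMq10 : (0:ℝ) ≤ M ^ (q - 1) := Real.rpow_nonneg hMpos.le _
    have h6 : c ^ (q - 1) * N ^ q * q * (g (y T) - g ystar) / σq
        ≤ M ^ (q - 1) * N ^ q * q * (g (y T) - g ystar) / σq := by
      gcongr
    have h7 : M ^ (q - 1) * N ^ q * q * (g (y T) - g ystar) / σq
        ≤ M ^ (q - 1) * N ^ q * q * (2 * μ * ρ ^ T * breg d (y 0) ystar) / σq := by
      gcongr
    calc ‖gradient g (y T)‖ ^ q ≤ (c * (N * ‖y T - y (T+1)‖)) ^ q := h1
      _ = c ^ q * (N ^ q * ‖y T - y (T+1)‖ ^ q) := h2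
      _ ≤ c ^ q * (N ^ q * (q / σq * ((g (y T) - g ystar) / c))) := h3
      _ = c ^ (q - 1) * N ^ q * q * (g (y T) - g ystar) / σq := h4
      _ ≤ M ^ (q - 1) * N ^ q * q * (g (y T) - g ystar) / σq := h6
      _ ≤ M ^ (q - 1) * N ^ q * q * (2 * μ * ρ ^ T * breg d (y 0) ystar) / σq := h7
      _ = (2 * q * M ^ (q - 1) * N ^ q * μ * breg d (y 0) ystar / σq) * ρ ^ T := by
          ring
  have hB0 : 0 ≤ 2 * q * M ^ (q - 1) * N ^ q * μ * breg d (y 0) ystar / σq := by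
    have h1 : (0:ℝ) ≤ M ^ (q - 1) := Real.rpow_nonneg hMpos.le _
    have h2 : (0:ℝ) ≤ N ^ q := Real.rpow_nonneg hN0 q
    positivity
  have hrhs : (2 * q * M ^ (q - 1) * N ^ q * μ * breg d (y 0) ystar / σq) ^ (1 / q)
        * ρ' ^ (-(T:ℝ) / q)
      = ((2 * q * M ^ (q - 1) * N ^ q * μ * breg d (y 0) ystar / σq) * ρ ^ T) ^ (1 / q) := by
    rw [Real.mul_rpow hB0 (by positivity)]
    congr 1
    rw [hρ'inv, ← Real.rpow_natCast ρ T, ← Real.rpow_mul hρpos.le,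
      Real.inv_rpow hρpos.le, ← Real.rpow_neg hρpos.le]
    congr 1
    ring
  rw [hrhs]
  have hq1 : q * (1 / q) = 1 := by field_simp
  calc ‖gradient g (y T)‖ = (‖gradient g (y T)‖ ^ q) ^ (1 / q) := by
        rw [← Real.rpow_mul hA0, hq1, Real.rpow_one]
    _ ≤ ((2 * q * M ^ (q - 1) * N ^ q * μ * breg d (y 0) ystar / σq) * ρ ^ T) ^ (1 / q) :=
        Real.rpow_le_rpow (Real.rpow_nonneg hA0 q) hAq (by positivity)
end

section
/- Suppose (H1)–(H4) hold (with (H3) taken on the sublevel set of g̃ = g + φ), g is twice continuously differentiable, and let {y_k} be generated by Algorithm B. Then for all k ≥ 0, the vector u(y_{k+1}) := ∇g(y_{k+1}) − ∇g(y_k) + 2L·[∇d(y_k) − ∇d(y_{k+1})] is a subgradient of g̃ at y_{k+1}, i.e., g̃(z) ≥ g̃(y_{k+1}) + ⟨u(y_{k+1}), z − y_{k+1}⟩ for all z ∈ E, and g̃(y_k) − g̃(y_{k+1}) ≥ [σ_q/(q·L^{q−1}·(3N)^q)]·‖u(y_{k+1})‖^q. -/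
open scoped InnerProductSpace

open InnerProductSpace (toDual)

section Helpers

variable {E : Type*} [NormedAddCommGroup E] [InnerProductSpace ℝ E] [CompleteSpace E]

lemma inner_gradient_eq (f : E → ℝ) (x v : E) :
    ⟪gradient f x, v⟫_ℝ = fderiv ℝ f x v := by
  simp [gradient, InnerProductSpace.toDual_symm_apply]

noncomputable def hess (f : E → ℝ) (x : E) : E →L[ℝ] E :=
  LinearMap.mkContinuous
    { toFun := fun v => (toDual ℝ E).symm (fderiv ℝ (fderiv ℝ f) x v)
      map_add' := fun u v => by simp [map_add]
      map_smul' := fun r v => by simp }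
    ‖fderiv ℝ (fderiv ℝ f) x‖
    (fun v => by
      simp only [LinearMap.coe_mk, AddHom.coe_mk]
      rw [LinearIsometryEquiv.norm_map]
      exact ContinuousLinearMap.le_opNorm _ _)

lemma hess_apply (f : E → ℝ) (x v : E) :
    hess f x v = (toDual ℝ E).symm (fderiv ℝ (fderiv ℝ f) x v) := rfl

lemma inner_hess (f : E → ℝ) (x v w : E) :
    ⟪hess f x v, w⟫_ℝ = fderiv ℝ (fderiv ℝ f) x v w := by
  rw [hess_apply, InnerProductSpace.toDual_symm_apply]

lemma norm_hess_apply (f : E → ℝ) (x v : E) :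
    ‖hess f x v‖ = ‖fderiv ℝ (fderiv ℝ f) x v‖ := by
  rw [hess_apply]
  exact LinearIsometryEquiv.norm_map _ _

omit [CompleteSpace E] in
lemma norm_fderiv2_apply_le (f : E → ℝ) (x v : E) :
    ‖fderiv ℝ (fderiv ℝ f) x v‖ ≤ ‖iteratedFDeriv ℝ 2 f x‖ * ‖v‖ := by
  refine ContinuousLinearMap.opNorm_le_bound _ (by positivity) fun w => ?_
  have h : fderiv ℝ (fderiv ℝ f) x v w = iteratedFDeriv ℝ 2 f x ![v, w] := by
    rw [iteratedFDeriv_two_apply]; simp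
  rw [h]
  calc ‖iteratedFDeriv ℝ 2 f x ![v, w]‖
      ≤ ‖iteratedFDeriv ℝ 2 f x‖ * ∏ i, ‖(![v, w] : Fin 2 → E) i‖ :=
        ContinuousMultilinearMap.le_opNorm _ _
    _ = ‖iteratedFDeriv ℝ 2 f x‖ * ‖v‖ * ‖w‖ := by
        simp [Fin.prod_univ_two]; ring

lemma hasFDerivAt_gradient {f : E → ℝ} (hf : ContDiff ℝ 2 f) (x : E) :
    HasFDerivAt (gradient f) (hess f x) x := by
  have h2 : ContDiff ℝ 1 (fderiv ℝ f) := hf.fderiv_right (by norm_num)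
  have hfd : HasFDerivAt (fderiv ℝ f) (fderiv ℝ (fderiv ℝ f) x) x :=
    ((h2.differentiable one_ne_zero) x).hasFDerivAt
  rw [hasFDerivAt_iff_isLittleO_nhds_zero] at hfd ⊢
  have h1 := Asymptotics.isLittleO_norm_left.2 hfd
  have heq : (fun h : E => ‖fderiv ℝ f (x + h) - fderiv ℝ f x
        - fderiv ℝ (fderiv ℝ f) x h‖)
      = fun h : E => ‖gradient f (x + h) - gradient f x - hess f x h‖ := by
    funext h
    rw [gradient, gradient, hess_apply, ← map_sub, ← map_sub,
      LinearIsometryEquiv.norm_map]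
  rw [heq] at h1
  exact Asymptotics.isLittleO_norm_left.1 h1

lemma hess_symm {f : E → ℝ} (hf : ContDiff ℝ 2 f) (x v w : E) :
    ⟪hess f x v, w⟫_ℝ = ⟪hess f x w, v⟫_ℝ := by
  rw [inner_hess, inner_hess]
  have h2 : ContDiff ℝ 1 (fderiv ℝ f) := hf.fderiv_right (by norm_num)
  exact second_derivative_symmetric
    (fun y => ((hf.differentiable two_ne_zero) y).hasFDerivAt)
    (((h2.differentiable one_ne_zero) x).hasFDerivAt) v w

lemma op_bound_of_form (A : E →L[ℝ] E) (M : ℝ) (hM : 0 ≤ M)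
    (hsymm : ∀ v w : E, ⟪A v, w⟫_ℝ = ⟪A w, v⟫_ℝ)
    (hpsd : ∀ v : E, 0 ≤ ⟪A v, v⟫_ℝ)
    (hbound : ∀ v : E, ⟪A v, v⟫_ℝ ≤ M * ‖v‖ ^ 2) (v : E) :
    ‖A v‖ ≤ M * ‖v‖ := by
  have hCS : ∀ x y : E, ⟪A x, y⟫_ℝ ^ 2 ≤ ⟪A x, x⟫_ℝ * ⟪A y, y⟫_ℝ := by
    intro x y
    have key : ∀ t : ℝ,
        0 ≤ ⟪A y, y⟫_ℝ * (t * t) + (2 * ⟪A x, y⟫_ℝ) * t + ⟪A x, x⟫_ℝ := by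
      intro t
      have h0 := hpsd (x + t • y)
      have hexp : ⟪A (x + t • y), x + t • y⟫_ℝ
          = ⟪A y, y⟫_ℝ * (t * t) + (2 * ⟪A x, y⟫_ℝ) * t + ⟪A x, x⟫_ℝ := by
        rw [map_add, map_smul]
        rw [inner_add_left, inner_add_right, inner_add_right,
          real_inner_smul_left, real_inner_smul_right,
          real_inner_smul_left, real_inner_smul_right]
        rw [hsymm y x]
        ring
      linarith [hexp ▸ h0]
    have hd := discrim_le_zero key
    rw [discrim] at hd
    nlinarith
  rcases eq_or_lt_of_le (norm_nonneg (A v)) with h0 | h0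
  · rw [← h0]; positivity
  · have h1 := hCS v (A v)
    have h2 : ⟪A v, A v⟫_ℝ = ‖A v‖ ^ 2 := real_inner_self_eq_norm_sq (A v)
    have h5 : (‖A v‖ ^ 2) ^ 2 ≤ (M * ‖v‖ ^ 2) * (M * ‖A v‖ ^ 2) := by
      calc (‖A v‖ ^ 2) ^ 2 = ⟪A v, A v⟫_ℝ ^ 2 := by rw [h2]
        _ ≤ ⟪A v, v⟫_ℝ * ⟪A (A v), A v⟫_ℝ := h1
        _ ≤ (M * ‖v‖ ^ 2) * (M * ‖A v‖ ^ 2) := by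
            have hb1 := hbound v
            have hb2 := hbound (A v)
            have hp1 := hpsd v
            have hp2 := hpsd (A v)
            nlinarith
    have h7 : ‖A v‖ ^ 2 ≤ (M * ‖v‖) ^ 2 := by nlinarith
    have h8 := Real.sqrt_le_sqrt h7
    rwa [Real.sqrt_sq (norm_nonneg _),
      Real.sqrt_sq (mul_nonneg hM (norm_nonneg v))] at h8

lemma hess_quadform_nonneg {f : E → ℝ} (hf : ContDiff ℝ 2 f)
    (h1 : ∀ x z : E, f z + ⟪gradient f z, x - z⟫_ℝ ≤ f x) (w h : E) :
    0 ≤ ⟪hess f w h, h⟫_ℝ := by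
  have mono2 : ∀ x z : E, 0 ≤ ⟪gradient f x - gradient f z, x - z⟫_ℝ := by
    intro x z
    have a1 := h1 x z
    have a2 := h1 z x
    have e1 : ⟪gradient f x, z - x⟫_ℝ = -⟪gradient f x, x - z⟫_ℝ := by
      rw [← neg_sub x z, inner_neg_right]
    rw [inner_sub_left]
    rw [e1] at a2
    linarith
  set G : ℝ → ℝ := fun t => ⟪h, gradient f (w + t • h)⟫_ℝ with hG
  have monoG : Monotone G := by
    intro s t hst
    rcases eq_or_lt_of_le hst with rfl | hlt
    · exact le_rfl
    · have key := mono2 (w + t • h) (w + s • h)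
      have e2 : (w + t • h) - (w + s • h) = (t - s) • h := by
        rw [add_sub_add_left_eq_sub, ← sub_smul]
      rw [e2, real_inner_smul_right, inner_sub_left] at key
      have hpos : 0 < t - s := by linarith
      have hkey : 0 ≤ ⟪gradient f (w + t • h), h⟫_ℝ - ⟪gradient f (w + s • h), h⟫_ℝ :=
        (mul_nonneg_iff_of_pos_left hpos).1 key
      simp only [hG]
      have c1 : ⟪h, gradient f (w + s • h)⟫_ℝ = ⟪gradient f (w + s • h), h⟫_ℝ :=
        real_inner_comm _ _
      have c2 : ⟪h, gradient f (w + t • h)⟫_ℝ = ⟪gradient f (w + t • h), h⟫_ℝ :=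
        real_inner_comm _ _
      rw [c1, c2]
      linarith
  have hline : HasDerivAt (fun t : ℝ => w + t • h) h 0 := by
    simpa using ((hasDerivAt_id (0:ℝ)).smul_const h).const_add w
  have hgr : HasFDerivAt (gradient f) (hess f w) ((fun t : ℝ => w + t • h) 0) := by
    simpa using hasFDerivAt_gradient hf w
  have hcomp : HasDerivAt (fun t : ℝ => gradient f (w + t • h)) (hess f w h) 0 :=
    by have := hgr.comp_hasDerivAt 0 hline; exact this
  have hGder : HasDerivAt G ⟪h, hess f w h⟫_ℝ 0 := by
    have := (innerSL ℝ h).hasFDerivAt.comp_hasDerivAt 0 hcomp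
    simpa [hG, Function.comp_def] using this
  have htend := hasDerivAt_iff_tendsto_slope.1 hGder
  have hev : ∀ᶠ t in nhdsWithin (0:ℝ) {(0:ℝ)}ᶜ, 0 ≤ slope G 0 t := by
    apply Filter.eventually_iff_exists_mem.2
    refine ⟨{(0:ℝ)}ᶜ, self_mem_nhdsWithin, fun t ht => ?_⟩
    rw [slope_def_field]
    rcases lt_or_gt_of_ne (Set.mem_compl_singleton_iff.1 ht) with hneg | hpos
    · apply div_nonneg_of_nonpos
      · simpa using sub_nonpos.2 (monoG hneg.le)
      · simpa using hneg.le
    · apply div_nonneg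
      · simpa using sub_nonneg.2 (monoG hpos.le)
      · simpa using hpos.le
  have hfin : 0 ≤ ⟪h, hess f w h⟫_ℝ := ge_of_tendsto htend hev
  rwa [real_inner_comm] at hfin

end Helpers


/-- Lemma A.8. Under (H1)–(H4) (with (H3) on the sublevel set of
`g̃ = g + φ`) and `g` twice continuously differentiable, for every `k ≥ 0` the vector
`u(y_{k+1}) = ∇g(y_{k+1}) − ∇g(y_k) + 2L[∇d(y_k) − ∇d(y_{k+1})]` is a subgradient of `g̃` at
`y_{k+1}`, and `g̃(y_k) − g̃(y_{k+1}) ≥ [σ_q/(q·L^{q−1}·(3N)^q)]·‖u(y_{k+1})‖^q`. -/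
theorem statement_18
    {E : Type*} [NormedAddCommGroup E] [InnerProductSpace ℝ E] [FiniteDimensional ℝ E]
    (d : E → ℝ) (hd : ConvexOn ℝ Set.univ d)
    (g : E → ℝ) (hg : ContDiff ℝ 2 g)
    (L : ℝ) (hL : 0 < L)
    (hH1 : ∀ x y : E, g x ≤ g y + ⟪gradient g y, x - y⟫_ℝ + L * breg d y x)
    (q σq : ℝ) (hq : 2 ≤ q) (hσq : 0 < σq)
    (hd2 : ContDiff ℝ 2 d)
    (hH2 : ∀ x y : E, σq / q * ‖x - y‖ ^ q ≤ breg d y x)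
    (μ : ℝ) (hμ : 0 ≤ μ)
    (hH4 : ∀ x y : E, g y + ⟪gradient g y, x - y⟫_ℝ + μ * breg d y x ≤ g x)
    (φ : E → EReal)
    (hφbot : ∀ z : E, φ z ≠ ⊥) (hφtop : ∃ z : E, φ z ≠ ⊤)
    (hφclosed : LowerSemicontinuous φ)
    (hφconv : ∀ u v : E, ∀ a b : ℝ, 0 < a → 0 < b → a + b = 1 →
      φ (a • u + b • v) ≤ (a : EReal) * φ u + (b : EReal) * φ v)
    (y : ℕ → E) (hy0 : φ (y 0) ≠ ⊤)
    (halg : ∀ k : ℕ, φ (y (k + 1)) ≠ ⊤ ∧ ∀ z : E,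
      ((⟪gradient g (y k), y (k + 1) - y k⟫_ℝ
          + 2 * L * breg d (y k) (y (k + 1)) : ℝ) : EReal) + φ (y (k + 1))
        ≤ ((⟪gradient g (y k), z - y k⟫_ℝ + 2 * L * breg d (y k) z : ℝ) : EReal) + φ z)
    (N : ℝ)
    (hH3 : ∀ z ∈ convexHull ℝ
        {w : E | ((g w : ℝ) : EReal) + φ w ≤ ((g (y 0) : ℝ) : EReal) + φ (y 0)},
      ‖iteratedFDeriv ℝ 2 d z‖ ≤ N) :
    ∀ k : ℕ,
      (∀ z : E,
        ((g (y (k + 1)) : ℝ) : EReal) + φ (y (k + 1))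
            + ((⟪gradient g (y (k + 1)) - gradient g (y k)
                + (2 * L) • (gradient d (y k) - gradient d (y (k + 1))),
                z - y (k + 1)⟫_ℝ : ℝ) : EReal)
          ≤ ((g z : ℝ) : EReal) + φ z) ∧
      ((g (y (k + 1)) : ℝ) : EReal) + φ (y (k + 1))
          + ((σq / (q * L ^ (q - 1) * (3 * N) ^ q)
              * ‖gradient g (y (k + 1)) - gradient g (y k)
                  + (2 * L) • (gradient d (y k) - gradient d (y (k + 1)))‖ ^ q : ℝ) : EReal)
        ≤ ((g (y k) : ℝ) : EReal) + φ (y k) := by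
  classical
  have hq0 : (0:ℝ) < q := by linarith
  have breg_nonneg : ∀ u v : E, 0 ≤ breg d u v := fun u v =>
    le_trans (mul_nonneg (div_nonneg hσq.le hq0.le)
      (Real.rpow_nonneg (norm_nonneg _) q)) (hH2 v u)
  have hgfirst : ∀ x z : E, g z + ⟪gradient g z, x - z⟫_ℝ ≤ g x := by
    intro x z
    have h1 := hH4 x z
    have h2 := mul_nonneg hμ (breg_nonneg z x)
    linarith
  have hφyt : ∀ k, φ (y k) ≠ ⊤ := by
    intro k
    cases k with
    | zero => exact hy0
    | succ n => exact (halg n).1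
  set p : ℕ → ℝ := fun k => (φ (y k)).toReal with hpdef
  have hpk : ∀ k, φ (y k) = ((p k : ℝ) : EReal) := fun k =>
    (EReal.coe_toReal (hφyt k) (hφbot _)).symm
  have halg_real : ∀ (k : ℕ) (z : E) (s : ℝ), φ z = (s : EReal) →
      ⟪gradient g (y k), y (k+1) - y k⟫_ℝ + 2*L*breg d (y k) (y (k+1)) + p (k+1)
        ≤ ⟪gradient g (y k), z - y k⟫_ℝ + 2*L*breg d (y k) z + s := by
    intro k z s hz
    have h := (halg k).2 z
    rw [hpk (k+1), hz, ← EReal.coe_add, ← EReal.coe_add] at h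
    exact_mod_cast h
  have hdesc : ∀ k, g (y (k+1)) + p (k+1) + L * breg d (y k) (y (k+1)) ≤ g (y k) + p k := by
    intro k
    have h0 := halg_real k (y k) (p k) (hpk k)
    have hbr0 : breg d (y k) (y k) = 0 := by simp [breg]
    rw [sub_self, inner_zero_right, hbr0] at h0
    have h1 := hH1 (y (k+1)) (y k)
    have h2 := breg_nonneg (y k) (y (k+1))
    linarith
  have hsub : ∀ k, g (y k) + p k ≤ g (y 0) + p 0 := by
    intro k
    induction k with
    | zero => exact le_rfl
    | succ n ih =>
      have h1 := hdesc n
      have h2 := mul_nonneg hL.le (breg_nonneg (y n) (y (n+1)))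
      linarith
  set S := {w : E | ((g w : ℝ) : EReal) + φ w ≤ ((g (y 0) : ℝ) : EReal) + φ (y 0)} with hSdef
  have hyS : ∀ k, y k ∈ S := by
    intro k
    show ((g (y k) : ℝ) : EReal) + φ (y k) ≤ ((g (y 0) : ℝ) : EReal) + φ (y 0)
    rw [hpk k, hpk 0, ← EReal.coe_add, ← EReal.coe_add]
    exact_mod_cast hsub k
  have hN0 : 0 ≤ N := le_trans (norm_nonneg _) (hH3 (y 0) (subset_convexHull ℝ S (hyS 0)))
  have hdlt : Differentiable ℝ d := hd2.differentiable two_ne_zero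
  have hglt : Differentiable ℝ g := hg.differentiable two_ne_zero
  have hfd_eq : ∀ z : E, fderiv ℝ (fun x => L * d x - g x) z
      = L • fderiv ℝ d z - fderiv ℝ g z := by
    intro z
    rw [fderiv_fun_sub ((hdlt z).const_mul L) (hglt z), fderiv_const_mul (hdlt z) L]
  have hfC : ContDiff ℝ 2 (fun x => L * d x - g x) := (contDiff_const.mul hd2).sub hg
  have hgradf : ∀ z v : E, ⟪gradient (fun x => L * d x - g x) z, v⟫_ℝ
      = L * ⟪gradient d z, v⟫_ℝ - ⟪gradient g z, v⟫_ℝ := by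
    intro z v
    rw [inner_gradient_eq, inner_gradient_eq, inner_gradient_eq, hfd_eq]
    simp
  have hffirst : ∀ x z : E, (fun x => L * d x - g x) z
      + ⟪gradient (fun x => L * d x - g x) z, x - z⟫_ℝ ≤ (fun x => L * d x - g x) x := by
    intro x z
    simp only
    rw [hgradf]
    have h1 := hH1 x z
    have hbreg : breg d z x = d x - d z - ⟪gradient d z, x - z⟫_ℝ := rfl
    rw [hbreg] at h1
    linarith
  have hdd1 : ContDiff ℝ 1 (fderiv ℝ d) := hd2.fderiv_right (by norm_num)
  have hgd1 : ContDiff ℝ 1 (fderiv ℝ g) := hg.fderiv_right (by norm_num)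
  have hfd2_eq : ∀ z : E, fderiv ℝ (fderiv ℝ (fun x => L * d x - g x)) z
      = L • fderiv ℝ (fderiv ℝ d) z - fderiv ℝ (fderiv ℝ g) z := by
    intro z
    have he : fderiv ℝ (fun x => L * d x - g x) = fun w => L • fderiv ℝ d w - fderiv ℝ g w :=
      funext hfd_eq
    rw [he, fderiv_fun_sub (f := fun w => L • fderiv ℝ d w) (((hdd1.differentiable one_ne_zero) z).const_smul L)
      ((hgd1.differentiable one_ne_zero) z), fderiv_fun_const_smul ((hdd1.differentiable one_ne_zero) z) L]
  have hhessf : ∀ z v : E, ⟪hess (fun x => L * d x - g x) z v, v⟫_ℝ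
      = L * ⟪hess d z v, v⟫_ℝ - ⟪hess g z v, v⟫_ℝ := by
    intro z v
    rw [inner_hess, inner_hess, inner_hess, hfd2_eq]
    simp
  have hQg_nonneg : ∀ z v : E, 0 ≤ ⟪hess g z v, v⟫_ℝ := fun z v =>
    hess_quadform_nonneg hg hgfirst z v
  have hQg_le : ∀ z v : E, ⟪hess g z v, v⟫_ℝ ≤ L * ⟪hess d z v, v⟫_ℝ := by
    intro z v
    have h1 := hess_quadform_nonneg hfC hffirst z v
    rw [hhessf z v] at h1
    linarith
  have hQd_le : ∀ z ∈ convexHull ℝ S, ∀ v : E, ⟪hess d z v, v⟫_ℝ ≤ N * ‖v‖^2 := by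
    intro z hz v
    have hn := norm_fderiv2_apply_le d z v
    rw [← norm_hess_apply] at hn
    calc ⟪hess d z v, v⟫_ℝ ≤ ‖hess d z v‖ * ‖v‖ := real_inner_le_norm _ _
      _ ≤ (‖iteratedFDeriv ℝ 2 d z‖ * ‖v‖) * ‖v‖ :=
          mul_le_mul_of_nonneg_right hn (norm_nonneg v)
      _ ≤ (N * ‖v‖) * ‖v‖ :=
          mul_le_mul_of_nonneg_right
            (mul_le_mul_of_nonneg_right (hH3 z hz) (norm_nonneg v)) (norm_nonneg v)
      _ = N * ‖v‖^2 := by ring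
  have hopg : ∀ z ∈ convexHull ℝ S, ∀ v : E, ‖hess g z v‖ ≤ (L*N) * ‖v‖ := by
    intro z hz
    refine op_bound_of_form (hess g z) (L*N) (mul_nonneg hL.le hN0)
      (hess_symm hg z) (hQg_nonneg z) ?_
    intro v
    calc ⟪hess g z v, v⟫_ℝ ≤ L * ⟪hess d z v, v⟫_ℝ := hQg_le z v
      _ ≤ L * (N * ‖v‖^2) := mul_le_mul_of_nonneg_left (hQd_le z hz v) hL.le
      _ = L*N*‖v‖^2 := by ring
  have hopd : ∀ z ∈ convexHull ℝ S, ∀ v : E, ‖hess d z v‖ ≤ N * ‖v‖ := by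
    intro z hz v
    rw [norm_hess_apply]
    calc ‖fderiv ℝ (fderiv ℝ d) z v‖ ≤ ‖iteratedFDeriv ℝ 2 d z‖ * ‖v‖ :=
          norm_fderiv2_apply_le d z v
      _ ≤ N * ‖v‖ := mul_le_mul_of_nonneg_right (hH3 z hz) (norm_nonneg v)
  intro k
  have hseg : segment ℝ (y k) (y (k+1)) ⊆ convexHull ℝ S :=
    (convex_convexHull ℝ S).segment_subset (subset_convexHull ℝ S (hyS k))
      (subset_convexHull ℝ S (hyS (k+1)))
  have hlipg : ‖gradient g (y (k+1)) - gradient g (y k)‖ ≤ (L*N) * ‖y (k+1) - y k‖ := by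
    refine (convex_segment (y k) (y (k+1))).norm_image_sub_le_of_norm_fderiv_le
      (fun z _ => (hasFDerivAt_gradient hg z).differentiableAt)
      (fun z hz => ?_) (left_mem_segment ℝ _ _) (right_mem_segment ℝ _ _)
    rw [(hasFDerivAt_gradient hg z).fderiv]
    exact ContinuousLinearMap.opNorm_le_bound _ (mul_nonneg hL.le hN0) (hopg z (hseg hz))
  have hlipd : ‖gradient d (y (k+1)) - gradient d (y k)‖ ≤ N * ‖y (k+1) - y k‖ := by
    refine (convex_segment (y k) (y (k+1))).norm_image_sub_le_of_norm_fderiv_le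
      (fun z _ => (hasFDerivAt_gradient hd2 z).differentiableAt)
      (fun z hz => ?_) (left_mem_segment ℝ _ _) (right_mem_segment ℝ _ _)
    rw [(hasFDerivAt_gradient hd2 z).fderiv]
    exact ContinuousLinearMap.opNorm_le_bound _ hN0 (hopd z (hseg hz))
  set u : E := gradient g (y (k+1)) - gradient g (y k)
    + (2*L) • (gradient d (y k) - gradient d (y (k+1))) with hudef
  have hub : ‖u‖ ≤ 3*L*N*‖y (k+1) - y k‖ := by
    have h1 := norm_add_le (gradient g (y (k+1)) - gradient g (y k))
      ((2*L) • (gradient d (y k) - gradient d (y (k+1))))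
    have h2 : ‖(2*L) • (gradient d (y k) - gradient d (y (k+1)))‖
        = (2*L) * ‖gradient d (y (k+1)) - gradient d (y k)‖ := by
      rw [norm_smul, Real.norm_eq_abs, abs_of_pos (by linarith : (0:ℝ) < 2*L),
        norm_sub_rev]
    have h3 := mul_le_mul_of_nonneg_left hlipd (by linarith : (0:ℝ) ≤ 2*L)
    rw [hudef]
    calc ‖gradient g (y (k+1)) - gradient g (y k)
        + (2*L) • (gradient d (y k) - gradient d (y (k+1)))‖
        ≤ ‖gradient g (y (k+1)) - gradient g (y k)‖
          + ‖(2*L) • (gradient d (y k) - gradient d (y (k+1)))‖ := h1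
      _ ≤ (L*N) * ‖y (k+1) - y k‖ + (2*L) * (N * ‖y (k+1) - y k‖) := by
          rw [h2]; exact add_le_add hlipg h3
      _ = 3*L*N*‖y (k+1) - y k‖ := by ring
  constructor
  · -- subgradient inequality
    intro z
    by_cases hzt : φ z = ⊤
    · rw [hzt, EReal.add_top_of_ne_bot (EReal.coe_ne_bot _)]
      exact le_top
    · have hzs : φ z = (((φ z).toReal : ℝ) : EReal) :=
        (EReal.coe_toReal hzt (hφbot z)).symm
      set s : ℝ := (φ z).toReal with hsdef
      set b : E := y (k+1) with hbdef
      set a : E := y k with hadef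
      set c : ℝ := ⟪gradient d b, z - b⟫_ℝ with hcdef
      have hC : 0 ≤ ⟪gradient g a, z - b⟫_ℝ + 2*L*c
          - 2*L*⟪gradient d a, z - b⟫_ℝ + (s - p (k+1)) := by
        have hb_line : HasDerivAt (fun t : ℝ => b + t • (z - b)) (z - b) 0 := by
          simpa using ((hasDerivAt_id (0:ℝ)).smul_const (z - b)).const_add b
        have hder : HasDerivAt (fun t : ℝ => d (b + t • (z - b))) c 0 := by
          have hd' : HasFDerivAt d (fderiv ℝ d b) ((fun t : ℝ => b + t • (z - b)) 0) := by
            simpa using (hdlt b).hasFDerivAt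
          have hcv : c = fderiv ℝ d b (z - b) := by rw [hcdef, inner_gradient_eq]
          rw [hcv]
          exact hd'.comp_hasDerivAt 0 hb_line
        have htend : Filter.Tendsto (slope (fun t : ℝ => d (b + t • (z - b))) 0)
            (nhdsWithin 0 (Set.Ioi (0:ℝ))) (nhds c) :=
          (hasDerivAt_iff_tendsto_slope.1 hder).mono_left
            (nhdsWithin_mono 0 (fun x hx => Set.mem_compl_singleton_iff.2 (ne_of_gt hx)))
        have hev : ∀ᶠ t in nhdsWithin (0:ℝ) (Set.Ioi (0:ℝ)),
            0 ≤ ⟪gradient g a, z - b⟫_ℝ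
              + 2*L*(slope (fun t : ℝ => d (b + t • (z - b))) 0 t)
              - 2*L*⟪gradient d a, z - b⟫_ℝ + (s - p (k+1)) := by
          refine Filter.eventually_iff_exists_mem.2
            ⟨Set.Ioo 0 1, Ioo_mem_nhdsGT_of_mem ⟨le_refl 0, zero_lt_one⟩, fun t ht => ?_⟩
          have ht0 : 0 < t := ht.1
          have ht1 : t < 1 := ht.2
          set zt : E := b + t • (z - b) with hztdef
          have hconv := hφconv b z (1 - t) t (by linarith) ht0 (by ring)
          have hcombo : (1 - t) • b + t • z = zt := by
            rw [hztdef, sub_smul, one_smul, smul_sub]; abel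
          rw [hcombo, hpk (k+1), hzs] at hconv
          rw [← EReal.coe_mul, ← EReal.coe_mul, ← EReal.coe_add] at hconv
          have hztt : φ zt ≠ ⊤ := ne_top_of_le_ne_top (EReal.coe_ne_top _) hconv
          have hzt_eq : φ zt = (((φ zt).toReal : ℝ) : EReal) :=
            (EReal.coe_toReal hztt (hφbot zt)).symm
          set st : ℝ := (φ zt).toReal with hstdef
          have hst_le : st ≤ (1-t) * p (k+1) + t * s := by
            rw [hzt_eq] at hconv
            exact_mod_cast hconv
          have hkey := halg_real k zt st hzt_eq
          have e1 : zt - a = (b - a) + t • (z - b) := by rw [hztdef]; abel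
          have hbregt : breg d a zt
              = breg d a b + (d zt - d b) - t * ⟪gradient d a, z - b⟫_ℝ := by
            show d zt - d a - ⟪gradient d a, zt - a⟫_ℝ
              = (d b - d a - ⟪gradient d a, b - a⟫_ℝ) + (d zt - d b)
                - t * ⟪gradient d a, z - b⟫_ℝ
            rw [e1, inner_add_right, real_inner_smul_right]
            ring
          have hinner : ⟪gradient g a, zt - a⟫_ℝ
              = ⟪gradient g a, b - a⟫_ℝ + t * ⟪gradient g a, z - b⟫_ℝ := by
            rw [e1, inner_add_right, real_inner_smul_right]
          rw [hbregt, hinner] at hkey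
          have hslope : d zt - d b
              = t * slope (fun t : ℝ => d (b + t • (z - b))) 0 t := by
            rw [slope_def_field, show b + (0:ℝ) • (z - b) = b by simp, sub_zero,
              mul_comm, div_mul_cancel₀ _ (ne_of_gt ht0), hztdef]
          rw [hslope] at hkey
          have hring : t * (⟪gradient g a, z - b⟫_ℝ
                + 2*L*(slope (fun t : ℝ => d (b + t • (z - b))) 0 t)
                - 2*L*⟪gradient d a, z - b⟫_ℝ + (s - p (k+1)))
              = t * ⟪gradient g a, z - b⟫_ℝ
                + 2*L*(t * slope (fun t : ℝ => d (b + t • (z - b))) 0 t)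
                - 2*L*(t*⟪gradient d a, z - b⟫_ℝ) + (t*s - t*p (k+1)) := by ring
          have h9 : 0 ≤ t * (⟪gradient g a, z - b⟫_ℝ
              + 2*L*(slope (fun t : ℝ => d (b + t • (z - b))) 0 t)
              - 2*L*⟪gradient d a, z - b⟫_ℝ + (s - p (k+1))) := by
            rw [hring]
            nlinarith [hkey, hst_le]
          exact (mul_nonneg_iff_of_pos_left ht0).1 h9
        have T := (((htend.const_mul (2*L)).const_add
            (⟪gradient g a, z - b⟫_ℝ)).sub_const
            (2*L*⟪gradient d a, z - b⟫_ℝ)).add_const (s - p (k+1))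
        exact ge_of_tendsto T hev
      have hfinal : g b + p (k+1) + ⟪u, z - b⟫_ℝ ≤ g z + s := by
        have hgz := hgfirst z b
        have hexp : ⟪u, z - b⟫_ℝ = ⟪gradient g b, z - b⟫_ℝ - ⟪gradient g a, z - b⟫_ℝ
            + 2*L*(⟪gradient d a, z - b⟫_ℝ - c) := by
          rw [hudef, inner_add_left, inner_sub_left, real_inner_smul_left,
            inner_sub_left, hcdef]
        rw [hexp]
        linarith
      rw [hpk (k+1), hzs, ← EReal.coe_add, ← EReal.coe_add, ← EReal.coe_add]
      exact_mod_cast hfinal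
  · -- descent inequality
    have hcoef : σq / (q * L ^ (q-1) * (3*N) ^ q) * ‖u‖ ^ q
        ≤ L * breg d (y k) (y (k+1)) := by
      have hbr := hH2 (y (k+1)) (y k)
      rcases eq_or_lt_of_le hN0 with hN | hN
      · have h30 : ((3:ℝ)*N) ^ q = 0 := by
          rw [← hN, mul_zero, Real.zero_rpow (ne_of_gt hq0)]
        rw [h30, mul_zero, div_zero, zero_mul]
        exact mul_nonneg hL.le (breg_nonneg _ _)
      · have h3N : (0:ℝ) < 3*N := by linarith
        have hLq : (0:ℝ) < L ^ (q-1) := Real.rpow_pos_of_pos hL _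
        have h3Nq : (0:ℝ) < (3*N) ^ q := Real.rpow_pos_of_pos h3N q
        have hupow : ‖u‖ ^ q ≤ (3*L*N) ^ q * ‖y (k+1) - y k‖ ^ q := by
          have h1 : ‖u‖ ^ q ≤ (3*L*N*‖y (k+1) - y k‖) ^ q :=
            Real.rpow_le_rpow (norm_nonneg u) hub hq0.le
          rwa [Real.mul_rpow (by positivity) (norm_nonneg _)] at h1
        have hLL : L ^ (q-1) * L = L ^ q := by
          rw [← Real.rpow_add_one (ne_of_gt hL) (q-1)]
          norm_num
        have h1 : (3*L*N) ^ q = (3*N) ^ q * (L ^ (q-1) * L) := by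
          rw [show (3:ℝ)*L*N = (3*N)*L by ring, Real.mul_rpow h3N.le hL.le, hLL]
        have hkeyeq : σq / (q * L ^ (q-1) * (3*N) ^ q)
            * ((3*L*N) ^ q * ‖y (k+1) - y k‖ ^ q)
            = L * (σq / q * ‖y (k+1) - y k‖ ^ q) := by
          rw [h1]
          field_simp
        calc σq / (q * L ^ (q-1) * (3*N) ^ q) * ‖u‖ ^ q
            ≤ σq / (q * L ^ (q-1) * (3*N) ^ q)
              * ((3*L*N) ^ q * ‖y (k+1) - y k‖ ^ q) := by
              apply mul_le_mul_of_nonneg_left hupow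
              positivity
          _ = L * (σq / q * ‖y (k+1) - y k‖ ^ q) := hkeyeq
          _ ≤ L * breg d (y k) (y (k+1)) := mul_le_mul_of_nonneg_left hbr hL.le
    rw [hpk (k+1), hpk k, ← EReal.coe_add, ← EReal.coe_add, ← EReal.coe_add]
    have := hdesc k
    exact_mod_cast (by linarith : g (y (k+1)) + p (k+1)
      + σq / (q * L ^ (q-1) * (3*N) ^ q) * ‖u‖ ^ q ≤ g (y k) + p k)
end
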